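/- Let n be a positive integer, a = (a_1,...,a_n) and b = (b_1,...,b_n) be n-tuples of complex numbers, p = (p_1,...,p_n) nonnegative real weights with ∑_{i=1}^n p_i = 1, and r > 0 such that ∑_{i=1}^n p_i |b_i - conj(a_i)|^2 ≤ r^2. Then 0 ≤ ( (∑_{i=1}^n p_i |b_i|^2)(∑_{i=1}^n p_i |a_i|^2) )^{1/2} - | ∑_{i=1}^n p_i a_i b_i | ≤ ( (∑_{i=1}^n p_i |b_i|^2)(∑_{i=1}^n p_i |a_i|^2) )^{1/2} - | ∑_{i=1}^n p_i Re(a_i b_i) | ≤ ( (∑_{i=1}^n p_i |b_i|^2)(∑_{i=1}^n p_i |a_i|^2) )^{1/2} - ∑_{i=1}^n p_i Re(a_i b_i) ≤ (1/2) r^2. -/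

import Mathlib

theorem stmt_16 (n : ℕ) (hn : 0 < n) (a b : Fin n → ℂ) (p : Fin n → ℝ)
    (hp : ∀ k, 0 ≤ p k) (hp1 : ∑ i, p i = 1) (r : ℝ) (hr : 0 < r)
    (h1 : ∑ i, p i * ‖b i - (starRingEnd ℂ) (a i)‖ ^ 2 ≤ r ^ 2) :
    0 ≤ ((∑ i, p i * ‖b i‖ ^ 2) * (∑ i, p i * ‖a i‖ ^ 2)) ^ ((1 : ℝ) / 2)
        - ‖∑ i, (p i : ℂ) * a i * b i‖
    ∧ ((∑ i, p i * ‖b i‖ ^ 2) * (∑ i, p i * ‖a i‖ ^ 2)) ^ ((1 : ℝ) / 2)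
        - ‖∑ i, (p i : ℂ) * a i * b i‖
      ≤ ((∑ i, p i * ‖b i‖ ^ 2) * (∑ i, p i * ‖a i‖ ^ 2)) ^ ((1 : ℝ) / 2)
        - |∑ i, p i * (a i * b i).re|
    ∧ ((∑ i, p i * ‖b i‖ ^ 2) * (∑ i, p i * ‖a i‖ ^ 2)) ^ ((1 : ℝ) / 2)
        - |∑ i, p i * (a i * b i).re|
      ≤ ((∑ i, p i * ‖b i‖ ^ 2) * (∑ i, p i * ‖a i‖ ^ 2)) ^ ((1 : ℝ) / 2)
        - ∑ i, p i * (a i * b i).re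
    ∧ ((∑ i, p i * ‖b i‖ ^ 2) * (∑ i, p i * ‖a i‖ ^ 2)) ^ ((1 : ℝ) / 2)
        - ∑ i, p i * (a i * b i).re
      ≤ (1 / 2) * r ^ 2 := by
  set A := ∑ i, p i * ‖b i‖ ^ 2 with hA
  set B := ∑ i, p i * ‖a i‖ ^ 2 with hB
  have hA0 : 0 ≤ A := Finset.sum_nonneg fun i _ => mul_nonneg (hp i) (sq_nonneg _)
  have hB0 : 0 ≤ B := Finset.sum_nonneg fun i _ => mul_nonneg (hp i) (sq_nonneg _)
  have hrw : (A * B) ^ ((1 : ℝ) / 2) = Real.sqrt (A * B) := (Real.sqrt_eq_rpow _).symm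
  rw [hrw]
  -- Cauchy-Schwarz
  have cs' : (∑ i, p i * (‖a i‖ * ‖b i‖)) ≤ Real.sqrt (A * B) := by
    have h := Real.sum_mul_le_sqrt_mul_sqrt Finset.univ
      (fun i => Real.sqrt (p i) * ‖b i‖)
      (fun i => Real.sqrt (p i) * ‖a i‖)
    have e1 : ∀ i : Fin n, (Real.sqrt (p i) * ‖b i‖) *
        (Real.sqrt (p i) * ‖a i‖) = p i * (‖a i‖ * ‖b i‖) := by
      intro i
      rw [show (Real.sqrt (p i) * ‖b i‖) * (Real.sqrt (p i) * ‖a i‖)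
        = Real.sqrt (p i) * Real.sqrt (p i) * (‖a i‖ * ‖b i‖) by ring,
        Real.mul_self_sqrt (hp i)]
    have e2 : ∀ (c : Fin n → ℂ) (i : Fin n),
        (Real.sqrt (p i) * ‖c i‖) ^ 2 = p i * ‖c i‖ ^ 2 := by
      intro c i
      rw [mul_pow, Real.sq_sqrt (hp i)]
    simp only [e1, e2] at h
    calc (∑ i, p i * (‖a i‖ * ‖b i‖))
        ≤ Real.sqrt A * Real.sqrt B := h
      _ = Real.sqrt (A * B) := (Real.sqrt_mul hA0 _).symm
  have habs : ‖∑ i, (p i : ℂ) * a i * b i‖ ≤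
      ∑ i, p i * (‖a i‖ * ‖b i‖) := by
    refine le_trans (norm_sum_le _ _) (le_of_eq (Finset.sum_congr rfl fun i _ => ?_))
    rw [norm_mul, norm_mul, Complex.norm_real, Real.norm_eq_abs, abs_of_nonneg (hp i), mul_assoc]
  have key1 : ‖∑ i, (p i : ℂ) * a i * b i‖ ≤ Real.sqrt (A * B) :=
    le_trans habs cs'
  have hre : (∑ i, (p i : ℂ) * a i * b i).re = ∑ i, p i * (a i * b i).re := by
    rw [Complex.re_sum]
    exact Finset.sum_congr rfl fun i _ => by rw [mul_assoc, Complex.re_ofReal_mul]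
  have key2 : |∑ i, p i * (a i * b i).re| ≤ ‖∑ i, (p i : ℂ) * a i * b i‖ := by
    rw [← hre]; exact Complex.abs_re_le_norm _
  have key3 : ∑ i, p i * (a i * b i).re ≤ |∑ i, p i * (a i * b i).re| := le_abs_self _
  have hexp : ∑ i, p i * ‖b i - (starRingEnd ℂ) (a i)‖ ^ 2
      = A + B - 2 * ∑ i, p i * (a i * b i).re := by
    rw [hA, hB, ← Finset.sum_add_distrib, Finset.mul_sum, ← Finset.sum_sub_distrib]
    refine Finset.sum_congr rfl fun i _ => ?_
    rw [Complex.sq_norm, Complex.sq_norm, Complex.sq_norm, Complex.normSq_sub]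
    have : (b i * (starRingEnd ℂ) ((starRingEnd ℂ) (a i))).re = (a i * b i).re := by
      rw [Complex.conj_conj, mul_comm]
    rw [this]
    simp [Complex.normSq_conj]
    ring
  have hamgm : Real.sqrt (A * B) ≤ (A + B) / 2 := by
    have h2 : A * B ≤ ((A + B) / 2) ^ 2 := by nlinarith [sq_nonneg (A - B)]
    calc Real.sqrt (A * B) ≤ Real.sqrt (((A + B) / 2) ^ 2) := Real.sqrt_le_sqrt h2
      _ = (A + B) / 2 := Real.sqrt_sq (by linarith)
  rw [hexp] at h1
  refine ⟨by linarith, by linarith, by linarith, by linarith⟩
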